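/- The Weierstrass function f(x) = ∑_{n=0}^∞ b^n cos(a^n π x), with 0 < b < 1, a an odd positive integer, and ab > 1 + 3π/2, is continuous on ℝ but nowhere differentiable. -/

import Mathlib

open Real Finset
set_option maxHeartbeats 1000000

private lemma w_cos_lip (u v : ℝ) : |Real.cos u - Real.cos v| ≤ |u - v| := by
  rw [Real.cos_sub_cos]
  calc |(-2) * Real.sin ((u+v)/2) * Real.sin ((u-v)/2)|
      = 2 * (|Real.sin ((u+v)/2)| * |Real.sin ((u-v)/2)|) := by
        rw [abs_mul, abs_mul]; norm_num; ring
    _ ≤ 2 * (1 * |(u-v)/2|) := by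
        have h1 : |Real.sin ((u+v)/2)| ≤ 1 := Real.abs_sin_le_one _
        have h2 : |Real.sin ((u-v)/2)| ≤ |(u-v)/2| := Real.abs_sin_le_abs
        have := mul_le_mul h1 h2 (abs_nonneg _) zero_le_one
        linarith
    _ = |u - v| := by rw [one_mul, abs_div, abs_two]; ring

private lemma w_cos_int (N : ℤ) : Real.cos (N * π) = (-1:ℝ)^N := by
  simpa using Real.cos_int_mul_pi_sub 0 N

private lemma w_summable {b : ℝ} (hb0 : 0 < b) (hb1 : b < 1) (A : ℝ) (t : ℝ) :
    Summable (fun n : ℕ => b ^ n * Real.cos (A ^ n * π * t)) := by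
  refine Summable.of_norm_bounded (summable_geometric_of_lt_one hb0.le hb1) ?_
  intro n
  rw [norm_mul, norm_pow, Real.norm_eq_abs, Real.norm_eq_abs, abs_of_pos hb0]
  calc b ^ n * |Real.cos _| ≤ b ^ n * 1 := by
        gcongr; exact Real.abs_cos_le_one _
    _ = b ^ n := mul_one _

private lemma w_key (a : ℕ) (b : ℝ)
    (hb0 : 0 < b) (hb1 : b < 1) (ha : Odd a) (hapos : 0 < a)
    (hab : (a : ℝ) * b > 1 + 3 * Real.pi / 2)
    (x : ℝ) (m : ℕ) :
    ∃ y : ℝ, y ≠ x ∧ |y - x| ≤ 3 / 2 / (a:ℝ)^m ∧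
      ((a:ℝ)*b)^m * (2/3 - Real.pi/((a:ℝ)*b - 1)) ≤
      |((∑' n : ℕ, b ^ n * Real.cos ((a : ℝ) ^ n * Real.pi * y)) -
        ∑' n : ℕ, b ^ n * Real.cos ((a : ℝ) ^ n * Real.pi * x)) / (y - x)| := by
  have hpi : (3:ℝ) < π := Real.pi_gt_three
  set A : ℝ := (a : ℝ) with hA
  have hA0 : 0 < A := by rw [hA]; exact_mod_cast hapos
  have hAb1 : 1 < A * b := by nlinarith
  have hA1 : 1 < A := lt_of_lt_of_le hAb1 (by nlinarith)
  have hAm : 0 < A ^ m := pow_pos hA0 m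
  set α : ℤ := round (A ^ m * x) with hα
  set xm : ℝ := A ^ m * x - α with hxm
  have hxm2 : |xm| ≤ 1/2 := abs_sub_round _
  obtain ⟨hxml, hxmr⟩ := abs_le.mp hxm2
  set y : ℝ := ((α : ℝ) + 1) / A ^ m with hy
  have hyx : y - x = (1 - xm) / A ^ m := by
    rw [hy, hxm]; field_simp; ring
  have hDpos : 0 < y - x := by
    rw [hyx]; exact div_pos (by linarith) hAm
  have hne : y ≠ x := by
    intro h; rw [h, sub_self] at hDpos; exact lt_irrefl _ hDpos
  have hDle : y - x ≤ 3/2 / A ^ m := by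
    rw [hyx]; gcongr; linarith
  refine ⟨y, hne, ?_, ?_⟩
  · rw [abs_of_pos hDpos]; exact hDle
  -- the difference of the two sums
  have hsy := w_summable hb0 hb1 A y
  have hsx := w_summable hb0 hb1 A x
  set g : ℕ → ℝ := fun n => b ^ n * Real.cos (A ^ n * π * y) - b ^ n * Real.cos (A ^ n * π * x)
    with hg
  have hgsum : Summable g := hsy.sub hsx
  have hdiff : (∑' n, b ^ n * Real.cos (A ^ n * π * y)) - ∑' n, b ^ n * Real.cos (A ^ n * π * x)
      = ∑' n, g n := (hsy.tsum_sub hsx).symm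
  -- tail terms
  set ε : ℝ := (-1 : ℝ) ^ α with hε
  have hoddpow : ∀ k : ℕ, Odd ((a:ℤ) ^ k) := by
    intro k
    have : Odd (a ^ k) := ha.pow
    exact_mod_cast (Int.odd_coe_nat (a ^ k)).mpr this
  have hεabs : |ε| = 1 := by
    rw [hε]
    rcases Int.even_or_odd α with h | h
    · rw [h.neg_one_zpow]; norm_num
    · rw [h.neg_one_zpow]; norm_num
  have hangle_y : ∀ k : ℕ, A ^ (k + m) * π * y = (((a:ℤ) ^ k * (α + 1) : ℤ) : ℝ) * π := by
    intro k
    rw [hy, pow_add]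
    push_cast
    field_simp
    ring
  have hangle_x : ∀ k : ℕ,
      A ^ (k + m) * π * x = (((a:ℤ) ^ k * α : ℤ) : ℝ) * π + A ^ k * π * xm := by
    intro k
    have hx1 : A ^ m * x = (α : ℝ) + xm := by rw [hxm]; ring
    have h1 : A ^ (k + m) * π * x = A ^ k * (A ^ m * x) * π := by rw [pow_add]; ring
    rw [h1, hx1]
    push_cast
    ring
  have hcos_y : ∀ k : ℕ, Real.cos (A ^ (k + m) * π * y) = -ε := by
    intro k
    rw [hangle_y k, w_cos_int, zpow_mul, (hoddpow k).neg_one_zpow, hε,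
      zpow_add_one₀ (by norm_num : (-1:ℝ) ≠ 0)]
    ring
  have hcos_x : ∀ k : ℕ,
      Real.cos (A ^ (k + m) * π * x) = ε * Real.cos (A ^ k * π * xm) := by
    intro k
    rw [hangle_x k, Real.cos_add, w_cos_int, Real.sin_int_mul_pi, zpow_mul,
      (hoddpow k).neg_one_zpow, hε]
    ring
  have htail : ∀ k : ℕ,
      g (k + m) = -(ε * b ^ m) * (b ^ k * (1 + Real.cos (A ^ k * π * xm))) := by
    intro k
    show b ^ (k + m) * Real.cos (A ^ (k + m) * π * y)
        - b ^ (k + m) * Real.cos (A ^ (k + m) * π * x) = _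
    rw [hcos_y k, hcos_x k, pow_add]
    ring
  set T : ℝ := ∑' k : ℕ, b ^ k * (1 + Real.cos (A ^ k * π * xm)) with hT
  have hterm_nonneg : ∀ k : ℕ, 0 ≤ b ^ k * (1 + Real.cos (A ^ k * π * xm)) := by
    intro k
    have := Real.neg_one_le_cos (A ^ k * π * xm)
    have hbk : (0:ℝ) ≤ b ^ k := pow_nonneg hb0.le _
    nlinarith
  have hTsummable : Summable (fun k : ℕ => b ^ k * (1 + Real.cos (A ^ k * π * xm))) := by
    refine Summable.of_nonneg_of_le hterm_nonneg ?_
      ((summable_geometric_of_lt_one hb0.le hb1).mul_left 2)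
    intro k
    have := Real.cos_le_one (A ^ k * π * xm)
    have hbk : (0:ℝ) ≤ b ^ k := pow_nonneg hb0.le _
    nlinarith
  have hT1 : 1 ≤ T := by
    have h0 : b ^ 0 * (1 + Real.cos (A ^ 0 * π * xm)) ≤ T :=
      hTsummable.le_tsum 0 (fun j _ => hterm_nonneg j)
    have hc : 0 ≤ Real.cos (A ^ 0 * π * xm) := by
      apply Real.cos_nonneg_of_mem_Icc
      rw [pow_zero, one_mul]
      constructor
      · nlinarith
      · nlinarith
    rw [pow_zero, one_mul] at h0
    linarith
  have hS2 : ∑' k, g (k + m) = -(ε * b ^ m) * T := by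
    calc ∑' k, g (k + m)
        = ∑' k, (-(ε * b ^ m)) * (b ^ k * (1 + Real.cos (A ^ k * π * xm))) :=
          tsum_congr htail
      _ = (-(ε * b ^ m)) * T := tsum_mul_left
  have hbm : 0 < b ^ m := pow_pos hb0 m
  have hS2abs : b ^ m ≤ |∑' k, g (k + m)| := by
    rw [hS2, abs_mul, abs_neg, abs_mul, hεabs, one_mul, abs_of_pos hbm,
      abs_of_nonneg (by linarith : (0:ℝ) ≤ T)]
    nlinarith
  have hS1 : |∑ n ∈ Finset.range m, g n| ≤ π * (y - x) * ((A*b)^m / (A*b - 1)) := by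
    calc |∑ n ∈ Finset.range m, g n| ≤ ∑ n ∈ Finset.range m, |g n| :=
          Finset.abs_sum_le_sum_abs _ _
      _ ≤ ∑ n ∈ Finset.range m, (A*b)^n * (π * (y-x)) := by
          apply Finset.sum_le_sum
          intro n _
          have h1 : |g n| = b ^ n * |Real.cos (A^n*π*y) - Real.cos (A^n*π*x)| := by
            show |b ^ n * Real.cos (A^n*π*y) - b ^ n * Real.cos (A^n*π*x)| = _
            rw [← mul_sub, abs_mul, abs_of_pos (pow_pos hb0 n)]
          rw [h1]
          have h2 : |Real.cos (A^n*π*y) - Real.cos (A^n*π*x)| ≤ A^n * π * (y - x) := by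
            have hl := w_cos_lip (A^n*π*y) (A^n*π*x)
            have h3 : A^n*π*y - A^n*π*x = A^n*π*(y-x) := by ring
            have h4 : 0 < A^n*π*(y-x) :=
              mul_pos (mul_pos (pow_pos hA0 n) Real.pi_pos) hDpos
            rw [h3, abs_of_pos h4] at hl
            exact hl
          calc b^n * |Real.cos (A^n*π*y) - Real.cos (A^n*π*x)|
              ≤ b^n * (A^n * π * (y-x)) := by
                exact mul_le_mul_of_nonneg_left h2 (pow_nonneg hb0.le n)
            _ = (A*b)^n * (π*(y-x)) := by rw [mul_pow]; ring
      _ = (∑ n ∈ Finset.range m, (A*b)^n) * (π*(y-x)) := by rw [← Finset.sum_mul]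
      _ ≤ ((A*b)^m / (A*b-1)) * (π*(y-x)) := by
          have hden : (0:ℝ) < A*b - 1 := by linarith
          have hsum : (∑ n ∈ Finset.range m, (A*b)^n) ≤ (A*b)^m / (A*b-1) := by
            rw [geom_sum_eq (ne_of_gt hAb1) m]
            gcongr
            linarith
          have hpyx : 0 ≤ π*(y-x) := by positivity
          exact mul_le_mul_of_nonneg_right hsum hpyx
      _ = π * (y-x) * ((A*b)^m/(A*b-1)) := by ring
  set S1 := ∑ n ∈ Finset.range m, g n with hS1d
  set S2 := ∑' k : ℕ, g (k + m) with hS2d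
  have hsplit : ∑' n, g n = S1 + S2 := (hgsum.sum_add_tsum_nat_add m).symm
  rw [hdiff, hsplit, abs_div, abs_of_pos hDpos]
  have htri : |S2| - |S1| ≤ |S1 + S2| := by
    have h := abs_add_le (S1 + S2) (-S1)
    have h2 : S1 + S2 + -S1 = S2 := by ring
    rw [h2, abs_neg] at h
    linarith
  have hq1 : 2/3 * (A*b)^m ≤ b^m / (y - x) := by
    rw [le_div_iff₀ hDpos, mul_pow]
    have h6 : 2/3*(A^m*b^m)*(3/2/A^m) = b^m := by field_simp
    have h7 : 2/3*(A^m*b^m)*(y-x) ≤ 2/3*(A^m*b^m)*(3/2/A^m) :=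
      mul_le_mul_of_nonneg_left hDle (by positivity)
    linarith
  have hq2 : |S1| / (y - x) ≤ π * ((A*b)^m / (A*b-1)) := by
    rw [div_le_iff₀ hDpos]
    calc |S1| ≤ π * (y - x) * ((A*b)^m / (A*b-1)) := hS1
      _ = π * ((A*b)^m/(A*b-1)) * (y - x) := by ring
  have hq3 : b^m / (y-x) ≤ |S2| / (y-x) := by gcongr
  have hq4 : (|S2| - |S1|)/(y-x) ≤ |S1 + S2|/(y-x) := by gcongr
  calc (A*b)^m * (2/3 - π/(A*b-1))
      = 2/3*(A*b)^m - π * ((A*b)^m/(A*b-1)) := by ring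
    _ ≤ |S2|/(y-x) - |S1|/(y-x) := by linarith [le_trans hq1 hq3]
    _ = (|S2| - |S1|)/(y-x) := (sub_div _ _ _).symm
    _ ≤ |S1 + S2|/(y-x) := hq4

open Filter Topology in
/-- Weierstrass's continuous nowhere differentiable function. -/
theorem weierstrass_nowhere_differentiable (a : ℕ) (b : ℝ)
    (hb0 : 0 < b) (hb1 : b < 1) (ha : Odd a) (hapos : 0 < a)
    (hab : (a : ℝ) * b > 1 + 3 * Real.pi / 2)
    (f : ℝ → ℝ)
    (hf : ∀ x, f x = ∑' n : ℕ, b ^ n * Real.cos ((a : ℝ) ^ n * Real.pi * x)) :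
    Continuous f ∧ ∀ x : ℝ, ¬ DifferentiableAt ℝ f x := by
  have hpi : (3:ℝ) < π := Real.pi_gt_three
  have hA0 : (0:ℝ) < a := by exact_mod_cast hapos
  have hAb1 : 1 < (a:ℝ) * b := by nlinarith
  have hA1 : 1 < (a:ℝ) := lt_of_lt_of_le hAb1 (by nlinarith)
  have hfeq : f = fun x => ∑' n : ℕ, b ^ n * Real.cos ((a : ℝ) ^ n * Real.pi * x) :=
    funext hf
  constructor
  · rw [hfeq]
    apply continuous_tsum
      (f := fun (n : ℕ) (x : ℝ) => b ^ n * Real.cos ((a : ℝ) ^ n * Real.pi * x))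
      (u := fun n => b ^ n)
    · intro n
      fun_prop
    · exact summable_geometric_of_lt_one hb0.le hb1
    · intro n t
      rw [norm_mul, norm_pow, Real.norm_eq_abs, Real.norm_eq_abs, abs_of_pos hb0]
      calc b ^ n * |Real.cos _| ≤ b ^ n * 1 := by
            gcongr; exact Real.abs_cos_le_one _
        _ = b ^ n := mul_one _
  · intro x hdiff
    have hder : HasDerivAt f (deriv f x) x := hdiff.hasDerivAt
    rw [hasDerivAt_iff_tendsto_slope] at hder
    set L := deriv f x with hL
    choose y hne hclose hlow using fun m => w_key a b hb0 hb1 ha hapos hab x m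
    have hy0 : Tendsto (fun m => y m - x) atTop (𝓝 0) := by
      apply squeeze_zero_norm (fun m => hclose m)
      have h1 : Tendsto (fun m : ℕ => (3/2) * ((a:ℝ)⁻¹) ^ m) atTop (𝓝 ((3/2) * 0)) := by
        apply Tendsto.const_mul
        apply tendsto_pow_atTop_nhds_zero_of_lt_one (by positivity)
        rw [inv_lt_one_iff₀]; right; exact hA1
      have h2 : (fun m : ℕ => 3/2/(a:ℝ)^m) = fun m : ℕ => (3/2) * ((a:ℝ)⁻¹) ^ m := by
        funext m; rw [inv_pow]; ring
      rw [h2]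
      simpa using h1
    have hyx : Tendsto y atTop (𝓝[≠] x) := by
      rw [tendsto_nhdsWithin_iff]
      constructor
      · have := hy0.add_const x
        simpa using this
      · exact Filter.Eventually.of_forall fun m => hne m
    have hq : Tendsto (fun m => slope f x (y m)) atTop (𝓝 L) := hder.comp hyx
    have hbdd : ∀ᶠ m in atTop, |slope f x (y m)| < |L| + 1 :=
      (hq.abs).eventually_lt_const (by linarith [abs_nonneg L])
    have hc : 0 < 2/3 - π/((a:ℝ)*b - 1) := by
      have hlt : π/((a:ℝ)*b-1) < 2/3 := by
        rw [div_lt_iff₀ (by linarith)]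
        nlinarith
      linarith
    have hgrow : Tendsto (fun m : ℕ => ((a:ℝ)*b)^m * (2/3 - π/((a:ℝ)*b - 1)))
        atTop atTop :=
      (tendsto_pow_atTop_atTop_of_one_lt hAb1).atTop_mul_const hc
    have hcontra : ∀ᶠ m : ℕ in atTop,
        |L| + 1 < ((a:ℝ)*b)^m * (2/3 - π/((a:ℝ)*b - 1)) :=
      hgrow.eventually_gt_atTop (|L| + 1)
    obtain ⟨m, hm1, hm2⟩ := (hbdd.and hcontra).exists
    have hs : slope f x (y m) = (f (y m) - f x)/(y m - x) := slope_def_field f x (y m)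
    have hlm := hlow m
    rw [← hf (y m), ← hf x, ← hs] at hlm
    linarith
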